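/- arXiv:0801.2329 — 6 statements merged into one kernel-verified Lean document; each statement's English description precedes it below -/
import Mathlib

section
/- Let n ≥ 3 and 1 ≤ i ≤ n-2. Define vectors in ℝ^n: J_k = (i+1)e_k + (n-i-1)e_{i+1} for 1 ≤ k ≤ i, J_k = (i+1)e_1 + (n-i-1)e_k for i+2 ≤ k ≤ n, and J = n·e_n. Then the absolute value of the determinant of the n×n matrix whose rows are J_1,…,J_i, J_{i+2},…,J_n, J equals n·(i+1)^i·(n-i-1)^{n-i-1}. In particular, these n vectors are linearly independent. -/
def rowPerm (n : ℕ) (hn : 3 ≤ n) : Equiv.Perm (Fin n) where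
  toFun k := ⟨if (k : ℕ) = 0 then n - 1 else if (k : ℕ) = 1 then n - 2 else (k : ℕ) - 2,
    by have := k.isLt; split_ifs <;> omega⟩
  invFun m := ⟨if (m : ℕ) = n - 1 then 0 else if (m : ℕ) = n - 2 then 1 else (m : ℕ) + 2,
    by have := m.isLt; split_ifs <;> omega⟩
  left_inv k := by have := k.isLt; ext; simp only [Fin.val_mk]; split_ifs <;> first | omega | simp_all
  right_inv m := by have := m.isLt; ext; simp only [Fin.val_mk]; split_ifs <;> first | omega | simp_all

def colPerm (n i : ℕ) (hn : 3 ≤ n) (hi1 : 1 ≤ i) (hi2 : i ≤ n - 2) : Equiv.Perm (Fin n) where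
  toFun l := ⟨if (l : ℕ) = 0 then n - 1 else if (l : ℕ) = 1 then 0 else if (l : ℕ) = 2 then i
      else if (l : ℕ) ≤ i + 1 then (l : ℕ) - 2 else (l : ℕ) - 1,
    by have := l.isLt; split_ifs <;> omega⟩
  invFun c := ⟨if (c : ℕ) = n - 1 then 0 else if (c : ℕ) = 0 then 1 else if (c : ℕ) = i then 2
      else if (c : ℕ) < i then (c : ℕ) + 2 else (c : ℕ) + 1,
    by have := c.isLt; split_ifs <;> omega⟩
  left_inv l := by have := l.isLt; ext; simp only [Fin.val_mk]; split_ifs <;> first | omega | simp_all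
  right_inv c := by have := c.isLt; ext; simp only [Fin.val_mk]; split_ifs <;> first | omega | simp_all

lemma rowPerm_val (n : ℕ) (hn : 3 ≤ n) (k : Fin n) :
    ((rowPerm n hn) k : ℕ) = if (k : ℕ) = 0 then n - 1 else if (k : ℕ) = 1 then n - 2 else (k : ℕ) - 2 := rfl

lemma colPerm_val (n i : ℕ) (hn : 3 ≤ n) (hi1 : 1 ≤ i) (hi2 : i ≤ n - 2) (l : Fin n) :
    ((colPerm n i hn hi1 hi2) l : ℕ) = if (l : ℕ) = 0 then n - 1 else if (l : ℕ) = 1 then 0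
      else if (l : ℕ) = 2 then i else if (l : ℕ) ≤ i + 1 then (l : ℕ) - 2 else (l : ℕ) - 1 := rfl

set_option maxHeartbeats 1000000 in
/-- The determinant of the matrix with rows J_1,…,J_i, J_{i+2},…,J_n, J = n·e_n
has absolute value n·(i+1)^i·(n-i-1)^{n-i-1}; in particular the rows are
linearly independent. (Indices are 0-based: row r for r < i is J_{r+1},
row r for i ≤ r < n-1 is J_{r+2}, row n-1 is J.) -/
theorem stmt_0 (n i : ℕ) (hn : 3 ≤ n) (hi1 : 1 ≤ i) (hi2 : i ≤ n - 2)
    (M : Matrix (Fin n) (Fin n) ℝ)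
    (hM : ∀ r c : Fin n, M r c =
      if (r : ℕ) < i then
        (if (c : ℕ) = (r : ℕ) then ((i : ℝ) + 1) else 0) +
        (if (c : ℕ) = i then ((n : ℝ) - i - 1) else 0)
      else if (r : ℕ) < n - 1 then
        (if (c : ℕ) = 0 then ((i : ℝ) + 1) else 0) +
        (if (c : ℕ) = (r : ℕ) + 1 then ((n : ℝ) - i - 1) else 0)
      else (if (c : ℕ) = n - 1 then (n : ℝ) else 0)) :
    |M.det| = n * ((i : ℝ) + 1) ^ i * ((n : ℝ) - i - 1) ^ (n - i - 1) ∧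
      LinearIndependent ℝ M := by
  set ρ := rowPerm n hn with hρ
  set κ := colPerm n i hn hi1 hi2 with hκ
  -- |det M| = |det of the permuted matrix|
  have key : |(M.submatrix ρ κ).det| = |M.det| := by
    have h1 : M.submatrix ρ κ = (M.submatrix id κ).submatrix ρ id := rfl
    rw [h1, Matrix.det_permute, Matrix.det_permute']
    rcases Int.units_eq_one_or (Equiv.Perm.sign κ) with h | h <;>
      rcases Int.units_eq_one_or (Equiv.Perm.sign ρ) with h' | h' <;>
        simp [h, h', abs_mul]
  -- the permuted matrix is lower triangular
  have tri : (M.submatrix ρ κ).BlockTriangular OrderDual.toDual := by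
    intro k l hkl
    have hkl' : (k : ℕ) < (l : ℕ) := hkl
    have hk := k.isLt; have hl := l.isLt
    simp only [Matrix.submatrix_apply]
    rw [hM]
    have hρv := rowPerm_val n hn k
    have hκv := colPerm_val n i hn hi1 hi2 l
    split_ifs at hρv hκv <;>
      rw [hρv, hκv] <;>
      split_ifs <;> first | (exfalso; omega) | norm_num
  -- diagonal entries
  set g : ℕ → ℝ := fun k => if k = 0 then (n : ℝ) else if k = 2 then (n : ℝ) - i - 1
      else if k ≤ i + 1 then (i : ℝ) + 1 else (n : ℝ) - i - 1 with hg
  have hdiag : ∀ k : Fin n, (M.submatrix ρ κ) k k = g (k : ℕ) := by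
    intro k
    have hk := k.isLt
    simp only [Matrix.submatrix_apply]
    rw [hM]
    have hρv := rowPerm_val n hn k
    have hκv := colPerm_val n i hn hi1 hi2 k
    simp only [hg]
    split_ifs at hρv hκv <;>
      rw [hρv, hκv] <;>
      split_ifs <;> first | (exfalso; exact absurd ‹False› not_false) | (exfalso; omega) | norm_num | ring
  have hdet : (M.submatrix ρ κ).det = ∏ k : Fin n, g (k : ℕ) := by
    rw [Matrix.det_of_lowerTriangular _ tri]
    exact Finset.prod_congr rfl fun k _ => hdiag k
  -- compute the product
  have hprod : ∏ k : Fin n, g (k : ℕ)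
      = n * ((i : ℝ) + 1) ^ i * ((n : ℝ) - i - 1) ^ (n - i - 1) := by
    rw [Fin.prod_univ_eq_prod_range]
    rw [Finset.range_eq_Ico, ← Finset.prod_Ico_consecutive _ (by omega : 0 ≤ 3) (by omega : 3 ≤ n),
      ← Finset.prod_Ico_consecutive _ (by omega : 3 ≤ i + 2) (by omega : i + 2 ≤ n)]
    have h1 : ∏ k ∈ Finset.Ico 0 3, g k = n * (((i : ℝ) + 1) * ((n : ℝ) - i - 1)) := by
      show ∏ k ∈ Finset.range 3, g k = _
      rw [Finset.prod_range_succ, Finset.prod_range_succ, Finset.prod_range_succ,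
        Finset.prod_range_zero]
      simp [hg]
      try ring
    have h2 : ∏ k ∈ Finset.Ico 3 (i + 2), g k = ((i : ℝ) + 1) ^ (i - 1) := by
      have hc : ∀ k ∈ Finset.Ico 3 (i + 2), g k = (i : ℝ) + 1 := by
        intro k hk
        simp only [Finset.mem_Ico] at hk
        simp only [hg]
        split_ifs <;> first | rfl | (exfalso; omega)
      rw [Finset.prod_congr rfl hc, Finset.prod_const, Nat.card_Ico,
        (by omega : i + 2 - 3 = i - 1)]
    have h3 : ∏ k ∈ Finset.Ico (i + 2) n, g k = ((n : ℝ) - i - 1) ^ (n - i - 2) := by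
      have hc : ∀ k ∈ Finset.Ico (i + 2) n, g k = (n : ℝ) - i - 1 := by
        intro k hk
        simp only [Finset.mem_Ico] at hk
        simp only [hg]
        split_ifs <;> first | rfl | (exfalso; omega)
      rw [Finset.prod_congr rfl hc, Finset.prod_const, Nat.card_Ico,
        (by omega : n - (i + 2) = n - i - 2)]
    rw [h1, h2, h3]
    have e1 : ((i : ℝ) + 1) ^ i = ((i : ℝ) + 1) ^ (i - 1) * ((i : ℝ) + 1) := by
      rw [← pow_succ]; congr 1; omega
    have e2 : ((n : ℝ) - i - 1) ^ (n - i - 1)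
        = ((n : ℝ) - i - 1) ^ (n - i - 2) * ((n : ℝ) - i - 1) := by
      rw [← pow_succ]; congr 1; omega
    rw [e1, e2]; ring
  -- positivity of the claimed value
  have hpos : 0 < (n : ℝ) * ((i : ℝ) + 1) ^ i * ((n : ℝ) - i - 1) ^ (n - i - 1) := by
    have hn0 : (0 : ℝ) < n := by positivity
    have h1 : (0 : ℝ) < (n : ℝ) - i - 1 := by
      have : (i : ℝ) + 2 ≤ n := by exact_mod_cast (by omega : i + 2 ≤ n)
      linarith
    have := pow_pos h1 (n - i - 1)
    positivity
  have habs : |M.det| = n * ((i : ℝ) + 1) ^ i * ((n : ℝ) - i - 1) ^ (n - i - 1) := by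
    rw [← key, hdet, hprod, abs_of_pos hpos]
  refine ⟨habs, ?_⟩
  have hne : M.det ≠ 0 := by
    intro h
    rw [h, abs_zero] at habs
    exact absurd habs.symm (ne_of_gt hpos)
  exact Matrix.linearIndependent_rows_iff_isUnit.mpr
    ((Matrix.isUnit_iff_isUnit_det M).mpr (isUnit_iff_ne_zero.mpr hne))
end

section
/- Let n ≥ 3 and 1 ≤ i ≤ n-2. Define the cone Q ⊆ ℝ^n as the set of x ∈ ℝ^n with x_k ≥ 0 for all k ∈ [n] and -(n-i-1)(x_1+⋯+x_i) + (i+1)(x_{i+1}+⋯+x_n) ≥ 0. Then Q equals the cone generated (with nonnegative real coefficients) by the (i+1)(n-i) vectors {n·e_k : i+1 ≤ k ≤ n} ∪ {(i+1)e_j + (n-i-1)e_k : 1 ≤ j ≤ i, i+1 ≤ k ≤ n}. -/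
open scoped NNReal

lemma stmt3_aux_smul {n : ℕ} (S : Submodule ℝ≥0 (Fin n → ℝ)) {r : ℝ} (hr : 0 ≤ r)
    {v : Fin n → ℝ} (hv : v ∈ S) : r • v ∈ S := by
  have h : r • v = r.toNNReal • v := by
    rw [NNReal.smul_def, Real.coe_toNNReal r hr]
  rw [h]; exact S.smul_mem _ hv

/-- The cone {x ≥ 0, L(x) ≥ 0} equals the cone generated by the (i+1)(n-i)
vectors n·e_k (i+1 ≤ k ≤ n) and (i+1)e_j+(n-i-1)e_k (1 ≤ j ≤ i, i+1 ≤ k ≤ n),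
here written 0-based. -/
theorem stmt_3 (n i : ℕ) (hn : 3 ≤ n) (hi1 : 1 ≤ i) (hi2 : i ≤ n - 2)
    (e : Fin n → Fin n → ℝ) (he : ∀ j m, e j m = if m = j then 1 else 0)
    (Q : Set (Fin n → ℝ))
    (hQ : Q = {x | (∀ k, 0 ≤ x k) ∧
      0 ≤ -((n : ℝ) - i - 1) * ∑ k ∈ Finset.univ.filter (fun k : Fin n => (k : ℕ) < i), x k
        + ((i : ℝ) + 1) * ∑ k ∈ Finset.univ.filter (fun k : Fin n => i ≤ (k : ℕ)), x k})
    (G : Set (Fin n → ℝ))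
    (hG : G = {v | (∃ k : Fin n, i ≤ (k : ℕ) ∧ v = (n : ℝ) • e k) ∨
      (∃ j k : Fin n, (j : ℕ) < i ∧ i ≤ (k : ℕ) ∧
        v = ((i : ℝ) + 1) • e j + ((n : ℝ) - i - 1) • e k)}) :
    Q = (Submodule.span ℝ≥0 G : Submodule ℝ≥0 (Fin n → ℝ)) := by
  subst hQ hG
  set A : Finset (Fin n) := Finset.univ.filter (fun k : Fin n => (k : ℕ) < i) with hA
  set B : Finset (Fin n) := Finset.univ.filter (fun k : Fin n => i ≤ (k : ℕ)) with hB
  have hni : i + 2 ≤ n := by omega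
  have hniR : (i : ℝ) + 2 ≤ (n : ℝ) := by exact_mod_cast hni
  have hc1 : (1 : ℝ) ≤ (n : ℝ) - i - 1 := by linarith
  have hc2 : (0 : ℝ) < (i : ℝ) + 1 := by positivity
  have hnpos : (0 : ℝ) < (n : ℝ) := by linarith
  ext x
  simp only [Set.mem_setOf_eq, SetLike.mem_coe]
  constructor
  · -- hard direction: the cone is contained in the span
    rintro ⟨hx1, hx2⟩
    set SA := ∑ j ∈ A, x j with hSA
    set SB := ∑ k ∈ B, x k with hSB
    have hSA0 : 0 ≤ SA := Finset.sum_nonneg fun j _ => hx1 j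
    have hSB0 : 0 ≤ SB := Finset.sum_nonneg fun k _ => hx1 k
    have key : ((n : ℝ) - i - 1) * SA ≤ ((i : ℝ) + 1) * SB := by linarith
    rcases eq_or_lt_of_le hSB0 with h0 | hpos
    · -- SB = 0 forces x = 0
      have hxB : ∀ k ∈ B, x k = 0 :=
        (Finset.sum_eq_zero_iff_of_nonneg (fun k _ => hx1 k)).1 h0.symm
      have hSAz : SA = 0 := by nlinarith
      have hxA : ∀ j ∈ A, x j = 0 :=
        (Finset.sum_eq_zero_iff_of_nonneg (fun j _ => hx1 j)).1 hSAz
      have hx0 : x = 0 := by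
        funext m
        by_cases hm : (m : ℕ) < i
        · exact hxA m (by simp [hA, hm])
        · exact hxB m (by simp only [hB, Finset.mem_filter, Finset.mem_univ, true_and]; omega)
      rw [hx0]; exact Submodule.zero_mem _
    · -- main case : SB > 0
      have hSBne : SB ≠ 0 := ne_of_gt hpos
      have hx_eq : x = (∑ j ∈ A, ∑ k ∈ B, (x j * x k / (((i : ℝ) + 1) * SB)) •
            (((i : ℝ) + 1) • e j + ((n : ℝ) - i - 1) • e k)) +
          ∑ k ∈ B, (x k * (((i : ℝ) + 1) * SB - ((n : ℝ) - i - 1) * SA) /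
            (((i : ℝ) + 1) * SB * n)) • ((n : ℝ) • e k) := by
        funext m
        simp only [Pi.add_apply, Finset.sum_apply, Pi.smul_apply, smul_eq_mul, he]
        by_cases hm : (m : ℕ) < i
        · -- m in A
          have hmB : ∀ k ∈ B, (if m = k then (1 : ℝ) else 0) = 0 := by
            intro k hk
            rw [if_neg]
            intro h
            rw [hB] at hk; simp only [Finset.mem_filter, Finset.mem_univ, true_and] at hk
            omega
          have h2 : ∑ k ∈ B, x k * (((i : ℝ) + 1) * SB - ((n : ℝ) - i - 1) * SA) /
              (((i : ℝ) + 1) * SB * n) * ((n : ℝ) * (if m = k then 1 else 0)) = 0 :=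
            Finset.sum_eq_zero fun k hk => by rw [hmB k hk]; ring
          rw [h2, add_zero]
          have h1 : ∀ j ∈ A, (∑ k ∈ B, x j * x k / (((i : ℝ) + 1) * SB) *
              (((i : ℝ) + 1) * (if m = j then 1 else 0) +
                ((n : ℝ) - i - 1) * (if m = k then 1 else 0))) =
              if m = j then x j else 0 := by
            intro j hj
            have hterm : ∀ k ∈ B, x j * x k / (((i : ℝ) + 1) * SB) *
                (((i : ℝ) + 1) * (if m = j then 1 else 0) +
                  ((n : ℝ) - i - 1) * (if m = k then 1 else 0)) =
                x k * (x j * (((i : ℝ) + 1) * (if m = j then 1 else 0)) /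
                  (((i : ℝ) + 1) * SB)) := by
              intro k hk; rw [hmB k hk]; ring
            rw [Finset.sum_congr rfl hterm, ← Finset.sum_mul, ← hSB]
            by_cases hmj : m = j
            · rw [if_pos hmj, if_pos hmj]; field_simp
            · rw [if_neg hmj, if_neg hmj]; ring
          rw [Finset.sum_congr rfl h1, Finset.sum_ite_eq, if_pos (by simp [hA, hm])]
        · -- m in B
          have hmA : ∀ j ∈ A, (if m = j then (1 : ℝ) else 0) = 0 := by
            intro j hj
            rw [if_neg]
            intro h
            rw [hA] at hj; simp only [Finset.mem_filter, Finset.mem_univ, true_and] at hj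
            omega
          have hmBmem : m ∈ B := by
            simp only [hB, Finset.mem_filter, Finset.mem_univ, true_and]; omega
          have h1 : ∀ j ∈ A, (∑ k ∈ B, x j * x k / (((i : ℝ) + 1) * SB) *
              (((i : ℝ) + 1) * (if m = j then 1 else 0) +
                ((n : ℝ) - i - 1) * (if m = k then 1 else 0))) =
              x j * (x m * ((n : ℝ) - i - 1) / (((i : ℝ) + 1) * SB)) := by
            intro j hj
            have hterm : ∀ k ∈ B, x j * x k / (((i : ℝ) + 1) * SB) *
                (((i : ℝ) + 1) * (if m = j then 1 else 0) +
                  ((n : ℝ) - i - 1) * (if m = k then 1 else 0)) =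
                if m = k then x j * (x m * ((n : ℝ) - i - 1) / (((i : ℝ) + 1) * SB)) else 0 := by
              intro k hk
              rw [hmA j hj]
              by_cases h : m = k
              · subst h; rw [if_pos rfl, if_pos rfl]; ring
              · rw [if_neg h, if_neg h]; ring
            rw [Finset.sum_congr rfl hterm, Finset.sum_ite_eq, if_pos hmBmem]
          have h2 : ∑ k ∈ B, x k * (((i : ℝ) + 1) * SB - ((n : ℝ) - i - 1) * SA) /
              (((i : ℝ) + 1) * SB * n) * ((n : ℝ) * (if m = k then 1 else 0)) =
              x m * (((i : ℝ) + 1) * SB - ((n : ℝ) - i - 1) * SA) /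
                (((i : ℝ) + 1) * SB * n) * (n : ℝ) := by
            have hterm : ∀ k ∈ B, x k * (((i : ℝ) + 1) * SB - ((n : ℝ) - i - 1) * SA) /
                (((i : ℝ) + 1) * SB * n) * ((n : ℝ) * (if m = k then 1 else 0)) =
                if m = k then x m * (((i : ℝ) + 1) * SB - ((n : ℝ) - i - 1) * SA) /
                  (((i : ℝ) + 1) * SB * n) * (n : ℝ) else 0 := by
              intro k hk
              by_cases h : m = k
              · subst h; rw [if_pos rfl, if_pos rfl]; ring
              · rw [if_neg h, if_neg h]; ring
            rw [Finset.sum_congr rfl hterm, Finset.sum_ite_eq, if_pos hmBmem]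
          rw [Finset.sum_congr rfl h1, ← Finset.sum_mul, ← hSA, h2]
          field_simp
          ring
      rw [hx_eq]
      refine Submodule.add_mem _ ?_ ?_
      · refine Submodule.sum_mem _ fun j hj => Submodule.sum_mem _ fun k hk => ?_
        refine stmt3_aux_smul _ ?_ (Submodule.subset_span ?_)
        · exact div_nonneg (mul_nonneg (hx1 j) (hx1 k)) (by positivity)
        · rw [hA] at hj; rw [hB] at hk
          simp only [Finset.mem_filter, Finset.mem_univ, true_and] at hj hk
          exact Or.inr ⟨j, k, hj, hk, rfl⟩
      · refine Submodule.sum_mem _ fun k hk => ?_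
        refine stmt3_aux_smul _ ?_ (Submodule.subset_span ?_)
        · apply div_nonneg (mul_nonneg (hx1 k) (by linarith)) (by positivity)
        · rw [hB] at hk
          simp only [Finset.mem_filter, Finset.mem_univ, true_and] at hk
          exact Or.inl ⟨k, hk, rfl⟩
  · -- easy direction: the span is contained in the cone
    intro hx
    induction hx using Submodule.span_induction with
    | mem v hv =>
      rcases hv with ⟨k, hk, rfl⟩ | ⟨j, k, hj, hk, rfl⟩
      · constructor
        · intro m
          simp only [Pi.smul_apply, smul_eq_mul, he]
          split_ifs <;> simp <;> positivity
        · have hA0 : ∑ m ∈ A, ((n : ℝ) • e k) m = 0 := by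
            apply Finset.sum_eq_zero
            intro m hm
            simp only [Pi.smul_apply, smul_eq_mul, he]
            rw [if_neg, mul_zero]
            intro h
            rw [hA] at hm; simp only [Finset.mem_filter, Finset.mem_univ, true_and] at hm
            omega
          have hB0 : ∑ m ∈ B, ((n : ℝ) • e k) m = n := by
            have hterm : ∀ m ∈ B, ((n : ℝ) • e k) m = if k = m then (n : ℝ) else 0 := by
              intro m hm
              simp only [Pi.smul_apply, smul_eq_mul, he]
              by_cases h : m = k
              · subst h; simp
              · rw [if_neg h, if_neg (Ne.symm h), mul_zero]
            rw [Finset.sum_congr rfl hterm, Finset.sum_ite_eq, if_pos]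
            simp only [hB, Finset.mem_filter, Finset.mem_univ, true_and]; omega
          rw [hA0, hB0]
          nlinarith
      · constructor
        · intro m
          simp only [Pi.add_apply, Pi.smul_apply, smul_eq_mul, he]
          have h1 : (0:ℝ) ≤ ((i : ℝ) + 1) * (if m = j then 1 else 0) := by
            split_ifs <;> simp <;> positivity
          have h2 : (0:ℝ) ≤ ((n : ℝ) - i - 1) * (if m = k then 1 else 0) := by
            split_ifs <;> simp <;> linarith
          linarith
        · have hA0 : ∑ m ∈ A, (((i : ℝ) + 1) • e j + ((n : ℝ) - i - 1) • e k) m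
              = (i : ℝ) + 1 := by
            have hterm : ∀ m ∈ A, (((i : ℝ) + 1) • e j + ((n : ℝ) - i - 1) • e k) m =
                if j = m then (i : ℝ) + 1 else 0 := by
              intro m hm
              simp only [Pi.add_apply, Pi.smul_apply, smul_eq_mul, he]
              rw [hA] at hm; simp only [Finset.mem_filter, Finset.mem_univ, true_and] at hm
              have hmk : (if m = k then (1:ℝ) else 0) = 0 := by
                rw [if_neg]; intro h; subst h; omega
              rw [hmk, mul_zero, add_zero]
              by_cases h : m = j
              · subst h; rw [if_pos rfl, if_pos rfl, mul_one]
              · rw [if_neg h, if_neg (Ne.symm h), mul_zero]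
            rw [Finset.sum_congr rfl hterm, Finset.sum_ite_eq, if_pos]
            simp only [hA, Finset.mem_filter, Finset.mem_univ, true_and]; omega
          have hB0 : ∑ m ∈ B, (((i : ℝ) + 1) • e j + ((n : ℝ) - i - 1) • e k) m
              = (n : ℝ) - i - 1 := by
            have hterm : ∀ m ∈ B, (((i : ℝ) + 1) • e j + ((n : ℝ) - i - 1) • e k) m =
                if k = m then (n : ℝ) - i - 1 else 0 := by
              intro m hm
              simp only [Pi.add_apply, Pi.smul_apply, smul_eq_mul, he]
              rw [hB] at hm; simp only [Finset.mem_filter, Finset.mem_univ, true_and] at hm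
              have hmj : (if m = j then (1:ℝ) else 0) = 0 := by
                rw [if_neg]; intro h; subst h; omega
              rw [hmj, mul_zero, zero_add]
              by_cases h : m = k
              · subst h; rw [if_pos rfl, if_pos rfl, mul_one]
              · rw [if_neg h, if_neg (Ne.symm h), mul_zero]
            rw [Finset.sum_congr rfl hterm, Finset.sum_ite_eq, if_pos]
            simp only [hB, Finset.mem_filter, Finset.mem_univ, true_and]; omega
          rw [hA0, hB0]
          ring_nf
          nlinarith
    | zero => exact ⟨fun k => le_refl 0, by simp⟩
    | add v w hv hw ihv ihw =>
      obtain ⟨hv1, hv2⟩ := ihv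
      obtain ⟨hw1, hw2⟩ := ihw
      refine ⟨fun k => add_nonneg (hv1 k) (hw1 k), ?_⟩
      simp only [Pi.add_apply, Finset.sum_add_distrib]
      nlinarith
    | smul c v hv ihv =>
      obtain ⟨hv1, hv2⟩ := ihv
      refine ⟨fun k => ?_, ?_⟩
      · have := c.2
        simp only [Pi.smul_apply, NNReal.smul_def, smul_eq_mul]
        exact mul_nonneg c.2 (hv1 k)
      · simp only [Pi.smul_apply, NNReal.smul_def, smul_eq_mul, ← Finset.mul_sum]
        nlinarith [mul_nonneg (NNReal.coe_nonneg c) hv2]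
end

section
/- Let n ≥ 3, 1 ≤ i ≤ n-2, and let A ⊆ ℕ^n be the set of all vectors e_{j_1} + ⋯ + e_{j_n} with j_k ∈ [n] for k ∈ {1,…,i,n} and j_k ∈ [n]∖[i] for i+1 ≤ k ≤ n-1. Then the ℝ-span of A is all of ℝ^n; in particular the cone ℝ_+A has dimension n. -/
/-- The exponent vectors e_{j_1}+⋯+e_{j_n} (with j_k unrestricted for
k ∈ {1,…,i,n} and j_k ∈ [n]∖[i] for i+1 ≤ k ≤ n-1) span ℝ^n. -/
theorem stmt_11 (n i : ℕ) (hn : 3 ≤ n) (hi1 : 1 ≤ i) (hi2 : i ≤ n - 2)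
    (A : Set (Fin n → ℝ))
    (hA : A = {P | ∃ j : Fin n → Fin n,
      (∀ k : Fin n, i ≤ (k : ℕ) → (k : ℕ) ≤ n - 2 → i ≤ ((j k : ℕ))) ∧
      P = fun m => ∑ k : Fin n, if j k = m then (1 : ℝ) else 0}) :
    Submodule.span ℝ A = ⊤ := by
  classical
  have hin : i < n := by omega
  set E : Fin n → (Fin n → ℝ) := fun c m => if c = m then (1:ℝ) else 0 with hE
  have hn0 : (n : ℝ) ≠ 0 := by positivity
  -- Step 1: basis vectors with index ≥ i
  have h1 : ∀ c : Fin n, i ≤ (c:ℕ) → E c ∈ Submodule.span ℝ A := by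
    intro c hc
    have hmem : (fun m => ∑ _k : Fin n, if c = m then (1:ℝ) else 0) ∈ A := by
      rw [hA]; exact ⟨fun _ => c, fun k _ _ => hc, rfl⟩
    have hP : (fun m => ∑ _k : Fin n, if c = m then (1:ℝ) else 0) = (n:ℝ) • E c := by
      funext m
      simp [E, Finset.sum_const, mul_comm]
    have hEc : E c = (n:ℝ)⁻¹ • ((n:ℝ) • E c) := by
      rw [smul_smul, inv_mul_cancel₀ hn0, one_smul]
    rw [hEc, ← hP]
    exact Submodule.smul_mem _ _ (Submodule.subset_span hmem)
  -- Step 2: all basis vectors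
  have h2 : ∀ c : Fin n, E c ∈ Submodule.span ℝ A := by
    intro c
    by_cases hc : i ≤ (c:ℕ)
    · exact h1 c hc
    · set d : Fin n := ⟨i, hin⟩ with hd
      set j : Fin n → Fin n :=
        fun k => if i ≤ (k:ℕ) ∧ (k:ℕ) ≤ n - 2 then d else c with hj
      set P : Fin n → ℝ := fun m => ∑ k : Fin n, if j k = m then (1:ℝ) else 0 with hPdef
      have hmem : P ∈ A := by
        rw [hA]
        show ∃ j' : Fin n → Fin n, _
        refine ⟨j, fun k hk1 hk2 => ?_, rfl⟩
        simp only [hj]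
        rw [if_pos ⟨hk1, hk2⟩]
      set T : Finset (Fin n) :=
        Finset.univ.filter (fun k : Fin n => i ≤ (k:ℕ) ∧ (k:ℕ) ≤ n - 2) with hT
      set a : ℕ := T.card with ha
      set b : ℕ := (Finset.univ.filter
        (fun k : Fin n => ¬(i ≤ (k:ℕ) ∧ (k:ℕ) ≤ n - 2))).card with hb
      have hP : P = (a:ℝ) • E d + (b:ℝ) • E c := by
        funext m
        have hsplit := Finset.sum_filter_add_sum_filter_not Finset.univ
          (fun k : Fin n => i ≤ (k:ℕ) ∧ (k:ℕ) ≤ n - 2)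
          (fun k => if j k = m then (1:ℝ) else 0)
        have e1 : ∑ k ∈ T, (if j k = m then (1:ℝ) else 0)
            = (a:ℝ) * (if d = m then (1:ℝ) else 0) := by
          rw [Finset.sum_congr rfl (fun k hk => ?_), Finset.sum_const, nsmul_eq_mul]
          rw [Finset.mem_filter] at hk
          rw [hj]; simp [hk.2]
        have e2 : ∑ k ∈ Finset.univ.filter
              (fun k : Fin n => ¬(i ≤ (k:ℕ) ∧ (k:ℕ) ≤ n - 2)),
              (if j k = m then (1:ℝ) else 0)
            = (b:ℝ) * (if c = m then (1:ℝ) else 0) := by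
          rw [Finset.sum_congr rfl (fun k hk => ?_), Finset.sum_const, nsmul_eq_mul]
          rw [Finset.mem_filter] at hk
          rw [hj]; simp [hk.2]
        have : P m = ∑ k ∈ T, (if j k = m then (1:ℝ) else 0)
            + ∑ k ∈ Finset.univ.filter
              (fun k : Fin n => ¬(i ≤ (k:ℕ) ∧ (k:ℕ) ≤ n - 2)),
              (if j k = m then (1:ℝ) else 0) := by
          rw [hPdef]; exact (hsplit).symm
        rw [this, e1, e2]
        simp [E]
      have hb1 : 1 ≤ b := by
        rw [hb]
        refine Finset.card_pos.mpr ⟨⟨0, by omega⟩, ?_⟩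
        simp; omega
      have hbR : (b:ℝ) ≠ 0 := by
        exact_mod_cast Nat.one_le_iff_ne_zero.mp hb1
      have hEc : E c = (b:ℝ)⁻¹ • (P - (a:ℝ) • E d) := by
        rw [hP]
        rw [add_sub_cancel_left, smul_smul, inv_mul_cancel₀ hbR, one_smul]
      rw [hEc]
      refine Submodule.smul_mem _ _ (Submodule.sub_mem _
        (Submodule.subset_span hmem) (Submodule.smul_mem _ _ (h1 d ?_)))
      simp [hd]
  rw [eq_top_iff]
  intro x _
  have hx : x = ∑ c : Fin n, x c • E c := pi_eq_sum_univ x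
  rw [hx]
  exact Submodule.sum_mem _ (fun c _ => Submodule.smul_mem _ _ (h2 c))
end

section
/- Let n ≥ 3, 1 ≤ i ≤ n-2, and let A ⊆ ℕ^n be the set of all vectors e_{j_1} + ⋯ + e_{j_n} with j_k ∈ [n] for k ∈ {1,…,i,n} and j_k ∈ [n]∖[i] for i+1 ≤ k ≤ n-1. Then A = {α ∈ ℕ^n : α_1 + ⋯ + α_n = n and α_1 + ⋯ + α_i ≤ i+1}. -/
lemma sum_ind_get {β : Type*} [DecidableEq β] (L : List β) (m : β) :
    (∑ t : Fin L.length, if L.get t = m then 1 else 0) = L.count m := by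
  induction L with
  | nil => simp
  | cons a L ih =>
    have h : (∑ t : Fin (a :: L).length, if (a :: L).get t = m then 1 else 0)
        = (if a = m then 1 else 0) + ∑ t : Fin L.length, if L.get t = m then 1 else 0 :=
      Fin.sum_univ_succ _
    rw [h, ih, List.count_cons]
    split_ifs <;> simp_all <;> omega

lemma lenaux {β : Type*} (l : List β) (g : β → ℕ) :
    (l.flatMap fun u => List.replicate (g u) u).length = (l.map g).sum := by
  induction l with
  | nil => simp
  | cons a l ih => simp [ih]

lemma countaux {β : Type*} [DecidableEq β] (l : List β) (g : β → ℕ) (m : β) :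
    (l.flatMap fun u => List.replicate (g u) u).count m
      = (l.map fun u => if u = m then g u else 0).sum := by
  induction l with
  | nil => simp
  | cons a l ih =>
    simp only [List.flatMap_cons, List.count_append, ih, List.count_replicate, List.map_cons,
      List.sum_cons]
    split_ifs with h1 h2 h3 <;> simp_all

lemma filtermapsum {β : Type*} (l : List β) (p : β → Bool) (f : β → ℕ) :
    ((l.filter p).map f).sum = (l.map fun u => if p u then f u else 0).sum := by
  induction l with
  | nil => simp
  | cons a l ih =>
    by_cases h : p a <;> simp [h, ih]

/-- The exponent set A equals {α ∈ ℕ^n : |α| = n, α_1+⋯+α_i ≤ i+1}. -/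
theorem stmt_12 (n i : ℕ) (hn : 3 ≤ n) (hi1 : 1 ≤ i) (hi2 : i ≤ n - 2)
    (A : Set (Fin n → ℕ))
    (hA : A = {P | ∃ j : Fin n → Fin n,
      (∀ k : Fin n, i ≤ (k : ℕ) → (k : ℕ) ≤ n - 2 → i ≤ ((j k : ℕ))) ∧
      P = fun m => ∑ k : Fin n, if j k = m then 1 else 0}) :
    A = {α : Fin n → ℕ | ∑ k, α k = n ∧
      (∑ k ∈ Finset.univ.filter (fun k : Fin n => (k : ℕ) < i), α k) ≤ i + 1} := by
  subst hA
  ext α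
  simp only [Set.mem_setOf_eq]
  constructor
  · rintro ⟨j, hj, rfl⟩
    constructor
    · rw [Finset.sum_comm]
      have h1 : ∀ k : Fin n, (∑ m : Fin n, if j k = m then 1 else 0) = 1 := by
        intro k
        rw [Finset.sum_ite_eq]
        simp
      simp only [h1]
      simp
    · rw [Finset.sum_comm]
      have h1 : ∀ k : Fin n,
          (∑ m ∈ Finset.univ.filter (fun m : Fin n => (m : ℕ) < i), if j k = m then 1 else 0)
            = if ((j k : ℕ) < i) then 1 else 0 := by
        intro k
        rw [Finset.sum_filter]
        have h2 : ∀ m : Fin n, (if (m : ℕ) < i then (if j k = m then 1 else 0) else 0)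
            = if m = j k then (if ((j k : ℕ) < i) then 1 else 0) else 0 := by
          intro m
          by_cases h : m = j k
          · subst h; simp
          · simp [h, Ne.symm h]
        rw [Finset.sum_congr rfl (fun m _ => h2 m), Finset.sum_ite_eq']
        simp
      simp only [h1]
      have h3 : (∑ k : Fin n, if ((j k : ℕ) < i) then 1 else 0)
          ≤ ∑ k : Fin n, if ((k : ℕ) < i ∨ (k : ℕ) = n - 1) then 1 else 0 := by
        apply Finset.sum_le_sum
        intro k _
        split_ifs with ha hb hb
        · exact le_refl _
        · exfalso
          have hk := k.isLt
          have hc1 : i ≤ (k : ℕ) := by omega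
          have hc2 : (k : ℕ) ≤ n - 2 := by omega
          have := hj k hc1 hc2
          omega
        · omega
        · exact le_refl _
      refine h3.trans ?_
      rw [Fin.sum_univ_eq_sum_range (fun x => if x < i ∨ x = n - 1 then 1 else 0) n]
      have h4 : (∑ k ∈ Finset.range n, if (k < i ∨ k = n - 1) then 1 else 0)
          = ((Finset.range n).filter (fun k => k < i ∨ k = n - 1)).card := by
        rw [Finset.card_filter]
      rw [h4]
      have h5 : (Finset.range n).filter (fun k => k < i ∨ k = n - 1)
          = insert (n - 1) (Finset.range i) := by
        ext x
        simp only [Finset.mem_filter, Finset.mem_range, Finset.mem_insert]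
        omega
      rw [h5, Finset.card_insert_of_notMem (by simp; omega), Finset.card_range]
  · rintro ⟨hsum, hpart⟩
    set f : Fin n → List (Fin n) := fun u => List.replicate (α u) u with hf
    set l1 : List (Fin n) :=
      ((List.finRange n).filter (fun m : Fin n => decide ((m : ℕ) < i))).flatMap f with hl1def
    set l2 : List (Fin n) :=
      ((List.finRange n).filter (fun m : Fin n => !decide ((m : ℕ) < i))).flatMap f with hl2def
    set L : List (Fin n) := l1 ++ l2 with hLdef
    -- lengths
    have hlen1 : l1.length = ∑ k ∈ Finset.univ.filter (fun k : Fin n => (k : ℕ) < i), α k := by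
      rw [hl1def, lenaux, filtermapsum, ← Fin.sum_univ_def, Finset.sum_filter]
      simp
    have hlen2 : l2.length
        = ∑ k ∈ Finset.univ.filter (fun k : Fin n => ¬ (k : ℕ) < i), α k := by
      rw [hl2def, lenaux, filtermapsum, ← Fin.sum_univ_def, Finset.sum_filter]
      simp
    have hL : L.length = n := by
      rw [hLdef, List.length_append, hlen1, hlen2,
        Finset.sum_filter_add_sum_filter_not, hsum]
    -- counts
    have hcount : ∀ m : Fin n, L.count m = α m := by
      intro m
      rw [hLdef, List.count_append, hl1def, hl2def, countaux, countaux,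
        filtermapsum, filtermapsum, ← Fin.sum_univ_def, ← Fin.sum_univ_def]
      have e1 : (∑ u : Fin n, if decide ((u : ℕ) < i) then (if u = m then α u else 0) else 0)
          = ∑ u ∈ Finset.univ.filter (fun u : Fin n => (u : ℕ) < i),
              (if u = m then α u else 0) := by
        rw [Finset.sum_filter]; simp
      have e2 : (∑ u : Fin n, if !decide ((u : ℕ) < i) then (if u = m then α u else 0) else 0)
          = ∑ u ∈ Finset.univ.filter (fun u : Fin n => ¬ (u : ℕ) < i),
              (if u = m then α u else 0) := by
        rw [Finset.sum_filter]; simp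
      rw [e1, e2, Finset.sum_filter_add_sum_filter_not, Finset.sum_ite_eq']
      simp
    -- membership in l2
    have hmem2 : ∀ x ∈ l2, i ≤ (x : ℕ) := by
      intro x hx
      rw [hl2def, List.mem_flatMap] at hx
      obtain ⟨a, ha, hxa⟩ := hx
      rw [List.mem_filter] at ha
      have := List.eq_of_mem_replicate hxa
      subst this
      simpa using ha.2
    -- index function
    have hidx : ∀ k : Fin n,
        (if (k : ℕ) < i then (k : ℕ) else if (k : ℕ) = n - 1 then i else (k : ℕ) + 1)
          < L.length := by
      intro k
      rw [hL]
      have := k.isLt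
      split_ifs <;> omega
    set e : Fin n → Fin L.length := fun k => ⟨_, hidx k⟩ with he
    refine ⟨fun k => L.get (e k), ?_, ?_⟩
    · intro k hk1 hk2
      have hk := k.isLt
      have hidxval : (e k : ℕ) = (k : ℕ) + 1 := by
        rw [he]
        simp only
        rw [if_neg (by omega), if_neg (by omega)]
      have hge : l1.length ≤ (e k : ℕ) := by
        rw [hidxval, hlen1]
        omega
      have hlen12 : L.length = l1.length + l2.length := List.length_append
      have hlt : (e k : ℕ) - l1.length < l2.length := by
        have := (e k).isLt
        omega
      have hget : L.get (e k) = l2.get ⟨(e k : ℕ) - l1.length, hlt⟩ :=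
        by simp only [List.get_eq_getElem]; exact List.getElem_append_right hge
      show i ≤ (L.get (e k) : ℕ)
      rw [hget]
      exact hmem2 _ (List.get_mem l2 ⟨_, hlt⟩)
    · funext m
      have hbij : Function.Bijective e := by
        rw [Fintype.bijective_iff_injective_and_card]
        constructor
        · intro a b hab
          have h1 := a.isLt
          have h2 := b.isLt
          have : (e a : ℕ) = (e b : ℕ) := by rw [hab]
          rw [he] at this
          simp only at this
          apply Fin.ext
          split_ifs at this <;> omega
        · simp [hL]
      have := Function.Bijective.sum_comp hbij (fun t => if L.get t = m then 1 else 0)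
      rw [this, sum_ind_get, hcount]
end

section
/- Let n ≥ 3 and 1 ≤ i ≤ n-2, and let h(t) = Σ_{k=0}^{(i+1)t} C(k+i-1,k)·C(nt-k+n-i-1, nt-k) for t ≥ 0 (and h(t) = 0 for t < 0). Define h_j = Σ_{s=0}^{j} (-1)^s·h(j-s)·C(n,s) for 0 ≤ j ≤ n-1. Then the formal power series Σ_{t≥0} h(t)·x^t equals (h_0 + h_1 x + ⋯ + h_{n-1} x^{n-1})/(1-x)^n, with h_0 = 1. -/
open Finset fwdDiff

section HilbertHelpers

private lemma prodLin (m c : ℕ) :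
    ∏ r ∈ range c, (m + r + 1) = (m + c).choose c * c.factorial := by
  induction c with
  | zero => simp
  | succ c ih =>
    rw [Finset.prod_range_succ, ih]
    have key : (m + c + 1) * (m + c).choose c = (m + (c + 1)).choose (c + 1) * (c + 1) := by
      simpa [Nat.succ_eq_add_one, Nat.add_assoc] using Nat.add_one_mul_choose_eq (m + c) c
    calc (m + c).choose c * c.factorial * (m + c + 1)
        = ((m + c + 1) * (m + c).choose c) * c.factorial := by ring
      _ = ((m + (c + 1)).choose (c + 1) * (c + 1)) * c.factorial := by rw [key]
      _ = (m + (c + 1)).choose (c + 1) * (c + 1).factorial := by rw [Nat.factorial_succ]; ring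

private lemma prodLin' (m c : ℕ) :
    ∏ r ∈ range (c + 1), (m + r) = (m + c).choose (c + 1) * (c + 1).factorial := by
  cases m with
  | zero =>
    rw [Finset.prod_eq_zero (Finset.mem_range.2 (Nat.succ_pos c)) (by simp)]
    simp [Nat.choose_eq_zero_of_lt (Nat.lt_succ_self c)]
  | succ m =>
    have h1 := prodLin m (c + 1)
    have h2 : ∀ r, m + 1 + r = m + r + 1 := by omega
    calc ∏ r ∈ range (c + 1), (m + 1 + r) = ∏ r ∈ range (c + 1), (m + r + 1) := by
          exact Finset.prod_congr rfl fun r _ => h2 r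
      _ = (m + (c + 1)).choose (c + 1) * (c + 1).factorial := h1
      _ = (m + 1 + c).choose (c + 1) * (c + 1).factorial := by
          rw [show m + (c + 1) = m + 1 + c from by omega]

private lemma vand (a b N : ℕ) :
    ∑ k ∈ range (N + 1), ((a + k).choose a : ℚ) * ((b + (N - k)).choose b : ℚ)
      = ((a + b + 1 + N).choose (a + b + 1) : ℚ) := by
  have ha := PowerSeries.mk_add_choose_mul_one_sub_pow_eq_one (S := ℚ) (d := a)
  have hb := PowerSeries.mk_add_choose_mul_one_sub_pow_eq_one (S := ℚ) (d := b)
  have hc := PowerSeries.mk_add_choose_mul_one_sub_pow_eq_one (S := ℚ) (d := a + b + 1)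
  have key : (PowerSeries.mk fun n => ((a + n).choose a : ℚ)) *
      (PowerSeries.mk fun n => ((b + n).choose b : ℚ)) =
      PowerSeries.mk fun n => ((a + b + 1 + n).choose (a + b + 1) : ℚ) := by
    have h1 : ((PowerSeries.mk fun n => ((a + n).choose a : ℚ)) *
        (PowerSeries.mk fun n => ((b + n).choose b : ℚ))) *
          (1 - PowerSeries.X) ^ (a + b + 1 + 1) = 1 := by
      have hsplit : (1 - PowerSeries.X : PowerSeries ℚ) ^ (a + b + 1 + 1)
          = (1 - PowerSeries.X) ^ (a + 1) * (1 - PowerSeries.X) ^ (b + 1) := by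
        rw [← pow_add]; congr 1; omega
      rw [hsplit, show ((PowerSeries.mk fun n => ((a + n).choose a : ℚ)) *
        (PowerSeries.mk fun n => ((b + n).choose b : ℚ))) *
        ((1 - PowerSeries.X) ^ (a + 1) * (1 - PowerSeries.X) ^ (b + 1))
        = ((PowerSeries.mk fun n => ((a + n).choose a : ℚ)) * (1 - PowerSeries.X) ^ (a + 1)) *
          ((PowerSeries.mk fun n => ((b + n).choose b : ℚ)) * (1 - PowerSeries.X) ^ (b + 1))
        from by ring, ha, hb, one_mul]
    calc (PowerSeries.mk fun n => ((a + n).choose a : ℚ)) *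
          (PowerSeries.mk fun n => ((b + n).choose b : ℚ))
        = ((PowerSeries.mk fun n => ((a + n).choose a : ℚ)) *
          (PowerSeries.mk fun n => ((b + n).choose b : ℚ))) *
          ((PowerSeries.mk fun n => ((a + b + 1 + n).choose (a + b + 1) : ℚ)) *
            (1 - PowerSeries.X) ^ (a + b + 1 + 1)) := by rw [hc, mul_one]
      _ = (PowerSeries.mk fun n => ((a + b + 1 + n).choose (a + b + 1) : ℚ)) *
          (((PowerSeries.mk fun n => ((a + n).choose a : ℚ)) *
          (PowerSeries.mk fun n => ((b + n).choose b : ℚ))) *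
            (1 - PowerSeries.X) ^ (a + b + 1 + 1)) := by ring
      _ = _ := by rw [h1, mul_one]
  have h3 := congrArg (PowerSeries.coeff (R := ℚ) N) key
  rw [PowerSeries.coeff_mul, Finset.Nat.sum_antidiagonal_eq_sum_range_succ_mk] at h3
  simpa using h3

private lemma chs (p q : ℕ) : (p + q).choose q = (p + q).choose p := by
  have := Nat.choose_symm (Nat.le_add_right p q)
  rwa [Nat.add_sub_cancel_left] at this

private lemma innerSum (w B M : ℕ) :
    ∑ j ∈ range M, ((w + j).choose w : ℚ) * ((B + (M - 1 - j)).choose B : ℚ)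
      = ((M + w + B).choose (w + B + 1) : ℚ) := by
  cases M with
  | zero => simp [Nat.choose_eq_zero_of_lt (Nat.lt_succ_self (w + B))]
  | succ M =>
    calc ∑ j ∈ range (M + 1), ((w + j).choose w : ℚ) * ((B + (M + 1 - 1 - j)).choose B : ℚ)
        = ∑ j ∈ range (M + 1), ((w + j).choose w : ℚ) * ((B + (M - j)).choose B : ℚ) := by
          refine Finset.sum_congr rfl fun j hj => by rw [show M + 1 - 1 - j = M - j from by omega]
      _ = ((w + B + 1 + M).choose (w + B + 1) : ℚ) := vand w B M
      _ = ((M + 1 + w + B).choose (w + B + 1) : ℚ) := by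
          rw [show w + B + 1 + M = M + 1 + w + B from by omega]

private lemma keyT (a b t : ℕ) :
    ∑ k ∈ range ((a + 2) * t + 1),
        ((a + k).choose a : ℚ) * (((b + 1) + ((a + b + 3) * t - k)).choose (b + 1) : ℚ)
      + ∑ u ∈ range (a + 1),
        (((a + 2) * t + u).choose u : ℚ) *
          ((((b + 1) * t + ((a - u) + b + 1)).choose ((a - u) + b + 2)) : ℚ)
      = (((a + b + 3) * t + (a + b + 2)).choose (a + b + 2) : ℚ) := by
  have hexp : (a + b + 3) * t = (a + 2) * t + (b + 1) * t := by ring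
  rw [hexp]
  generalize (a + 2) * t = x
  generalize (b + 1) * t = M
  have hfull : ∑ k ∈ range (x + M + 1),
      ((a + k).choose a : ℚ) * (((b + 1) + (x + M - k)).choose (b + 1) : ℚ)
      = ((x + M + (a + b + 2)).choose (a + b + 2) : ℚ) := by
    have := vand a (b + 1) (x + M)
    rw [show a + (b + 1) + 1 = a + b + 2 from by omega,
      show a + b + 2 + (x + M) = x + M + (a + b + 2) from by omega] at this
    exact this
  rw [← hfull, ← Finset.sum_range_add_sum_Ico _ (show x + 1 ≤ x + M + 1 by omega)]
  congr 1
  rw [Finset.sum_Ico_eq_sum_range, show x + M + 1 - (x + 1) = M from by omega]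
  have step1 : ∀ j ∈ range M,
      ((a + (x + 1 + j)).choose a : ℚ) * (((b + 1) + (x + M - (x + 1 + j))).choose (b + 1) : ℚ)
      = (∑ u ∈ range (a + 1), ((x + u).choose u : ℚ) * (((a - u) + j).choose (a - u) : ℚ))
          * (((b + 1) + (M - 1 - j)).choose (b + 1) : ℚ) := by
    intro j hj
    have hj' : j < M := Finset.mem_range.1 hj
    have e1 : x + M - (x + 1 + j) = M - 1 - j := by omega
    have e2 : ((a + (x + 1 + j)).choose a : ℚ)
        = ∑ u ∈ range (a + 1), ((x + u).choose u : ℚ) * (((a - u) + j).choose (a - u) : ℚ) := by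
      have hv := vand x j a
      rw [← chs (x + j + 1) a] at hv
      rw [show a + (x + 1 + j) = x + j + 1 + a from by omega, ← hv]
      refine Finset.sum_congr rfl fun u hu => ?_
      rw [chs x u, show j + (a - u) = (a - u) + j from by omega, chs (a - u) j]
    rw [e1, e2]
  rw [Finset.sum_congr rfl step1]
  simp only [Finset.sum_mul]
  rw [Finset.sum_comm]
  refine Finset.sum_congr rfl fun u hu => ?_
  simp only [mul_assoc]
  rw [← Finset.mul_sum, innerSum (a - u) (b + 1) M,
    show M + (a - u) + (b + 1) = M + ((a - u) + b + 1) from by omega,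
    show (a - u) + (b + 1) + 1 = (a - u) + b + 2 from by omega]

private lemma chooseQ1 (α t c : ℕ) :
    (c.factorial : ℚ)⁻¹ * ∏ r ∈ range c, ((α : ℚ) * t + ((r : ℚ) + 1))
      = ((α * t + c).choose c : ℚ) := by
  have h2 : (∏ r ∈ range c, ((α : ℚ) * t + ((r : ℚ) + 1)))
      = ((α * t + c).choose c : ℚ) * c.factorial := by
    calc ∏ r ∈ range c, ((α : ℚ) * t + ((r : ℚ) + 1))
        = ∏ r ∈ range c, ((α * t + r + 1 : ℕ) : ℚ) := by
          refine Finset.prod_congr rfl fun r _ => by push_cast; ring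
      _ = ((∏ r ∈ range c, (α * t + r + 1) : ℕ) : ℚ) := by rw [Nat.cast_prod]
      _ = _ := by rw [prodLin (α * t) c]; push_cast; ring
  rw [h2]
  have hf : (c.factorial : ℚ) ≠ 0 := by exact_mod_cast c.factorial_ne_zero
  field_simp

private lemma chooseQ2 (α t c : ℕ) :
    ((c + 1).factorial : ℚ)⁻¹ * ∏ r ∈ range (c + 1), ((α : ℚ) * t + (r : ℚ))
      = ((α * t + c).choose (c + 1) : ℚ) := by
  have h2 : (∏ r ∈ range (c + 1), ((α : ℚ) * t + (r : ℚ)))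
      = ((α * t + c).choose (c + 1) : ℚ) * (c + 1).factorial := by
    calc ∏ r ∈ range (c + 1), ((α : ℚ) * t + (r : ℚ))
        = ∏ r ∈ range (c + 1), ((α * t + r : ℕ) : ℚ) := by
          refine Finset.prod_congr rfl fun r _ => by push_cast; ring
      _ = ((∏ r ∈ range (c + 1), (α * t + r) : ℕ) : ℚ) := by rw [Nat.cast_prod]
      _ = _ := by rw [prodLin' (α * t) c]; push_cast; ring
  rw [h2]
  have hf : ((c + 1).factorial : ℚ) ≠ 0 := by exact_mod_cast (c + 1).factorial_ne_zero
  field_simp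

private lemma degProdLin (c : ℕ) (f : ℕ → Polynomial ℚ) (hf : ∀ r, (f r).degree ≤ 1) :
    (∏ r ∈ range c, f r).degree ≤ (c : WithBot ℕ) := by
  induction c with
  | zero => simpa using Polynomial.degree_one_le
  | succ c ih =>
    rw [Finset.prod_range_succ]
    refine le_trans (Polynomial.degree_mul_le _ _) ?_
    calc (∏ r ∈ range c, f r).degree + (f c).degree ≤ (c : WithBot ℕ) + 1 :=
          add_le_add ih (hf c)
      _ = ((c + 1 : ℕ) : WithBot ℕ) := by push_cast; ring

private lemma degAux (v : ℚ) (c : ℕ) (l g : ℕ → ℚ) :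
    (Polynomial.C v * ∏ r ∈ range c,
      (Polynomial.C (l r) * Polynomial.X + Polynomial.C (g r))).degree ≤ (c : WithBot ℕ) := by
  refine le_trans (Polynomial.degree_mul_le _ _) ?_
  have h1 := Polynomial.degree_C_le (a := v)
  have h2 := degProdLin c _ (fun r => Polynomial.degree_linear_le (a := l r) (b := g r))
  calc (Polynomial.C v).degree + _ ≤ 0 + (c : WithBot ℕ) := add_le_add h1 h2
    _ = (c : WithBot ℕ) := by rw [zero_add]

private lemma hpowExp (n : ℕ) : (1 - PowerSeries.X : PowerSeries ℚ) ^ n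
    = ∑ s ∈ range (n + 1), PowerSeries.C ((-1) ^ s * (n.choose s : ℚ)) * PowerSeries.X ^ s := by
  rw [sub_eq_add_neg, add_comm, add_pow]
  refine Finset.sum_congr rfl fun s hs => ?_
  rw [neg_pow, one_pow, mul_one]
  rw [map_mul, map_pow, map_neg, map_one, map_natCast (PowerSeries.C (R := ℚ))]
  ring

private lemma taylorCoeffHigh (Q : Polynomial ℚ) (N m : ℕ) (hQ : Q.degree < (N + 1 : ℕ))
    (hm : N ≤ m) : (Polynomial.taylor 1 Q).coeff m = Q.coeff m := by
  rw [Polynomial.taylor_coeff, Polynomial.eval_eq_sum_range, Finset.sum_range_succ']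
  have hz : ∀ j, 1 ≤ j → (Polynomial.hasseDeriv m Q).coeff j = 0 := by
    intro j hj
    rw [Polynomial.hasseDeriv_coeff]
    have hle : ((N + 1 : ℕ) : WithBot ℕ) ≤ ((j + m : ℕ) : WithBot ℕ) := by
      exact_mod_cast (by omega : N + 1 ≤ j + m)
    have : Q.coeff (j + m) = 0 :=
      Polynomial.coeff_eq_zero_of_degree_lt (lt_of_lt_of_le hQ hle)
    simp [this]
  have h0 : (Polynomial.hasseDeriv m Q).coeff 0 = Q.coeff m := by
    rw [Polynomial.hasseDeriv_coeff]; simp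
  rw [Finset.sum_eq_zero (fun j _ => by rw [hz (j + 1) (by omega)]; ring)]
  simpa using h0

private lemma fdPoly (N : ℕ) : ∀ (Q : Polynomial ℚ), Q.degree < (N : ℕ) →
    ∀ t : ℕ, (Δ_[(1 : ℕ)])^[N] (fun s : ℕ => Q.eval (s : ℚ)) t = 0 := by
  induction N with
  | zero =>
    intro Q hQ t
    have : Q = 0 := Polynomial.degree_eq_bot.1 (Nat.WithBot.lt_zero_iff.1 (by exact_mod_cast hQ))
    simp [this]
  | succ N ih =>
    intro Q hQ t
    set Q' := Polynomial.taylor 1 Q - Q with hQ'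
    have hfd : Δ_[(1 : ℕ)] (fun s : ℕ => Q.eval (s : ℚ)) = fun s : ℕ => Q'.eval (s : ℚ) := by
      funext s
      simp only [fwdDiff, hQ', Polynomial.eval_sub, Polynomial.taylor_eval]
      push_cast
      ring
    have hdeg : Q'.degree < (N : ℕ) := by
      rw [Polynomial.degree_lt_iff_coeff_zero]
      intro m hm
      have hm' : N ≤ m := by exact_mod_cast hm
      rw [hQ', Polynomial.coeff_sub, taylorCoeffHigh Q N m hQ hm', sub_self]
    rw [Function.iterate_succ_apply, hfd]
    exact ih Q' hdeg t

private lemma polyEx (a b : ℕ) : ∃ P : Polynomial ℚ,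
    P.degree < ((a + b + 3 : ℕ) : WithBot ℕ) ∧
    ∀ t : ℕ, P.eval (t : ℚ) = (((a + b + 3) * t + (a + b + 2)).choose (a + b + 2) : ℚ)
      - ∑ u ∈ range (a + 1), (((a + 2) * t + u).choose u : ℚ) *
          ((((b + 1) * t + ((a - u) + b + 1)).choose ((a - u) + b + 1 + 1)) : ℚ) := by
  refine ⟨Polynomial.C (((a + b + 2).factorial : ℚ))⁻¹ * ∏ r ∈ range (a + b + 2),
      (Polynomial.C ((a + b + 3 : ℕ) : ℚ) * Polynomial.X + Polynomial.C ((r : ℚ) + 1))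
    - ∑ u ∈ range (a + 1),
      (Polynomial.C ((u.factorial : ℚ))⁻¹ * ∏ r ∈ range u,
        (Polynomial.C ((a + 2 : ℕ) : ℚ) * Polynomial.X + Polynomial.C ((r : ℚ) + 1)))
      * (Polynomial.C (((((a - u) + b + 1) + 1).factorial : ℚ))⁻¹ *
          ∏ r ∈ range (((a - u) + b + 1) + 1),
        (Polynomial.C ((b + 1 : ℕ) : ℚ) * Polynomial.X + Polynomial.C (r : ℚ))), ?_, ?_⟩
  · refine lt_of_le_of_lt (Polynomial.degree_sub_le _ _) ?_
    rw [max_lt_iff]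
    constructor
    · exact lt_of_le_of_lt (degAux _ _ _ _)
        (by exact_mod_cast (by omega : a + b + 2 < a + b + 3))
    · refine lt_of_le_of_lt (Polynomial.degree_sum_le _ _) ?_
      rw [Finset.sup_lt_iff (WithBot.bot_lt_coe _)]
      intro u hu
      have hu' : u < a + 1 := Finset.mem_range.1 hu
      refine lt_of_le_of_lt (Polynomial.degree_mul_le _ _) ?_
      refine lt_of_le_of_lt (add_le_add (degAux _ _ _ _) (degAux _ _ _ _)) ?_
      rw [← Nat.cast_add]
      exact_mod_cast (by omega : u + (((a - u) + b + 1) + 1) < a + b + 3)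
  · intro t
    simp only [Polynomial.eval_sub, Polynomial.eval_mul, Polynomial.eval_add, Polynomial.eval_C,
      Polynomial.eval_X, Polynomial.eval_prod, Polynomial.eval_finset_sum]
    rw [chooseQ1 (a + b + 3) t (a + b + 2)]
    congr 1
    refine Finset.sum_congr rfl fun u hu => ?_
    rw [chooseQ1 (a + 2) t u, chooseQ2 (b + 1) t ((a - u) + b + 1)]

end HilbertHelpers

/-- The Hilbert series of K[A]: Σ_t h(t) x^t = (h_0 + h_1 x + ⋯ + h_{n-1}x^{n-1})/(1-x)^n
with h_0 = 1, stated multiplied through by (1-x)^n. -/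
theorem stmt_15 (n i : ℕ) (hn : 3 ≤ n) (hi1 : 1 ≤ i) (hi2 : i ≤ n - 2)
    (h : ℕ → ℕ)
    (hh : ∀ t, h t = ∑ k ∈ Finset.range ((i + 1) * t + 1),
      Nat.choose (k + i - 1) k * Nat.choose (n * t - k + n - i - 1) (n * t - k))
    (H : ℕ → ℤ)
    (hH : ∀ j, H j = ∑ s ∈ Finset.range (j + 1),
      (-1 : ℤ) ^ s * (h (j - s) : ℤ) * (Nat.choose n s : ℤ)) :
    ((PowerSeries.mk fun t => (h t : ℚ)) * (1 - PowerSeries.X) ^ n =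
      ∑ j ∈ Finset.range n, PowerSeries.C ((H j : ℚ)) * PowerSeries.X ^ j) ∧
    H 0 = 1 := by
  obtain ⟨a, b, rfl, rfl⟩ : ∃ a b, i = a + 1 ∧ n = a + b + 3 :=
    ⟨i - 1, n - i - 2, by omega, by omega⟩
  set nn := a + b + 3 with hnn
  -- h 0 = 1 and H 0 = 1
  have h0 : h 0 = 1 := by rw [hh 0]; simp
  have hH0 : H 0 = 1 := by rw [hH 0]; simp [h0]
  -- cleaned formula for h
  have hh2 : ∀ t, (h t : ℚ) = ∑ k ∈ range ((a + 2) * t + 1),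
      ((a + k).choose a : ℚ) * (((b + 1) + ((a + b + 3) * t - k)).choose (b + 1) : ℚ) := by
    intro t
    rw [hh t]
    push_cast
    rw [show (a + 1 + 1) * t + 1 = (a + 2) * t + 1 from by ring_nf]
    refine Finset.sum_congr rfl fun k hk => ?_
    rw [show k + (a + 1) - 1 = a + k from by omega, chs a k,
      show (a + b + 3) * t - k + (a + b + 3) - (a + 1) - 1
        = (b + 1) + ((a + b + 3) * t - k) from by omega,
      chs (b + 1) ((a + b + 3) * t - k)]
  -- key closed form
  have hkey : ∀ t : ℕ, (h t : ℚ) = (((a + b + 3) * t + (a + b + 2)).choose (a + b + 2) : ℚ)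
      - ∑ u ∈ range (a + 1), (((a + 2) * t + u).choose u : ℚ) *
          ((((b + 1) * t + ((a - u) + b + 1)).choose ((a - u) + b + 1 + 1)) : ℚ) := by
    intro t
    have hk := keyT a b t
    rw [hh2 t]
    have harg : ∀ u : ℕ, (a - u) + b + 2 = (a - u) + b + 1 + 1 := fun u => by omega
    simp only [harg] at hk
    linarith [hk]
  obtain ⟨P, hdegP, hPe⟩ := polyEx a b
  have hevalP : ∀ t : ℕ, P.eval (t : ℚ) = (h t : ℚ) := fun t => by rw [hPe t, ← hkey t]
  constructor
  · ext j
    rw [hpowExp nn, Finset.mul_sum, map_sum, map_sum]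
    have hL : ∀ s : ℕ, (PowerSeries.coeff (R := ℚ) j) ((PowerSeries.mk fun t => (h t : ℚ)) *
        (PowerSeries.C ((-1) ^ s * (nn.choose s : ℚ)) * PowerSeries.X ^ s))
        = ((-1) ^ s * (nn.choose s : ℚ)) * (if s ≤ j then (h (j - s) : ℚ) else 0) := by
      intro s
      rw [show (PowerSeries.mk fun t => (h t : ℚ)) *
          (PowerSeries.C ((-1) ^ s * (nn.choose s : ℚ)) * PowerSeries.X ^ s)
          = PowerSeries.C ((-1) ^ s * (nn.choose s : ℚ)) *
            ((PowerSeries.mk fun t => (h t : ℚ)) * PowerSeries.X ^ s) from by ring,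
        PowerSeries.coeff_C_mul, PowerSeries.coeff_mul_X_pow']
      split_ifs with hsj
      · rw [PowerSeries.coeff_mk]
      · rfl
    have hR : ∀ j' : ℕ, (PowerSeries.coeff (R := ℚ) j)
        (PowerSeries.C ((H j' : ℚ)) * PowerSeries.X ^ j')
        = (H j' : ℚ) * (if j = j' then 1 else 0) := by
      intro j'
      rw [PowerSeries.coeff_C_mul, PowerSeries.coeff_X_pow]
    rw [Finset.sum_congr rfl fun s _ => hL s, Finset.sum_congr rfl fun j' _ => hR j']
    have hRHS : ∑ j' ∈ range nn, (H j' : ℚ) * (if j = j' then 1 else 0)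
        = if j ∈ range nn then (H j : ℚ) else 0 := by
      simp [mul_ite, Finset.sum_ite_eq]
    rw [hRHS]
    by_cases hj : j < nn
    · rw [if_pos (Finset.mem_range.2 hj)]
      rw [← Finset.sum_subset (Finset.range_subset_range.2 (by omega : j + 1 ≤ nn + 1))
        (fun s hs hns => by
          have hsj : ¬ (s ≤ j) := fun hc => hns (Finset.mem_range.2 (by omega))
          rw [if_neg hsj]
          ring)]
      rw [hH j]
      push_cast
      refine Finset.sum_congr rfl fun s hs => ?_
      have hsj : s ≤ j := by have := Finset.mem_range.1 hs; omega
      rw [if_pos hsj]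
      ring
    · rw [if_neg fun hc => hj (Finset.mem_range.1 hc)]
      have hjn : nn ≤ j := by omega
      have hzero : (Δ_[(1 : ℕ)])^[nn] (fun t : ℕ => (h t : ℚ)) (j - nn) = 0 := by
        have hfn : (fun t : ℕ => (h t : ℚ)) = fun t : ℕ => P.eval (t : ℚ) :=
          funext fun t => (hevalP t).symm
        rw [hfn]
        exact fdPoly nn P hdegP (j - nn)
      have hfd := fwdDiff_iter_eq_sum_shift (1 : ℕ) (fun t : ℕ => (h t : ℚ)) nn (j - nn)
      rw [hzero] at hfd
      calc ∑ s ∈ range (nn + 1), ((-1) ^ s * (nn.choose s : ℚ)) *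
            (if s ≤ j then (h (j - s) : ℚ) else 0)
          = ∑ s ∈ range (nn + 1), ((-1) ^ s * (nn.choose s : ℚ)) * (h (j - s) : ℚ) := by
            refine Finset.sum_congr rfl fun s hs => ?_
            have : s ≤ j := by have := Finset.mem_range.1 hs; omega
            rw [if_pos this]
        _ = ∑ k ∈ range (nn + 1), ((-1) ^ (nn + 1 - 1 - k) *
              (nn.choose (nn + 1 - 1 - k) : ℚ)) * (h (j - (nn + 1 - 1 - k)) : ℚ) := by
            exact (Finset.sum_range_reflect _ _).symm
        _ = ∑ k ∈ range (nn + 1), ((-1 : ℤ) ^ (nn - k) * (nn.choose k : ℤ)) •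
              (h (j - nn + k • (1 : ℕ)) : ℚ) := by
            refine Finset.sum_congr rfl fun k hk => ?_
            have hk' : k ≤ nn := by have := Finset.mem_range.1 hk; omega
            rw [show nn + 1 - 1 - k = nn - k from by omega, Nat.choose_symm hk',
              show j - (nn - k) = j - nn + k • (1 : ℕ) from by simp [smul_eq_mul]; omega]
            push_cast [zsmul_eq_mul]
            ring
        _ = 0 := hfd.symm
  · exact hH0
end

section
/- Let n ≥ 3, 1 ≤ i ≤ n-2, and let Q = {x ∈ ℝ^n : x_k ≥ 0 for all k ∈ [n], L(x) ≥ 0} with L(x) = -(n-i-1)Σ_{k=1}^i x_k + (i+1)Σ_{k=i+1}^n x_k. Then this representation of Q by n+1 halfspaces is irreducible: omitting any one of the n+1 inequalities yields a strictly larger set. -/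
/-- The representation of Q by the n+1 halfspaces {x_k ≥ 0} and {L(x) ≥ 0} is
irreducible: dropping any inequality strictly enlarges the set. -/
theorem stmt_18 (n i : ℕ) (hn : 3 ≤ n) (hi1 : 1 ≤ i) (hi2 : i ≤ n - 2)
    (L : (Fin n → ℝ) → ℝ)
    (hL : ∀ x, L x = -((n : ℝ) - i - 1) *
        (∑ k ∈ Finset.univ.filter (fun k : Fin n => (k : ℕ) < i), x k)
      + ((i : ℝ) + 1) *
        (∑ k ∈ Finset.univ.filter (fun k : Fin n => i ≤ (k : ℕ)), x k)) :
    (∀ k : Fin n, ∃ x : Fin n → ℝ,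
      x k < 0 ∧ (∀ m, m ≠ k → 0 ≤ x m) ∧ 0 ≤ L x) ∧
    (∃ x : Fin n → ℝ, L x < 0 ∧ ∀ m, 0 ≤ x m) := by
  have hi2' : i + 2 ≤ n := by omega
  have hiln : i < n := by omega
  set I : Fin n := ⟨i, hiln⟩ with hI
  have hA : Finset.univ.filter (fun k : Fin n => (k : ℕ) < i) = Finset.Iio I := by
    ext m; simp [Fin.lt_def, -Fin.val_fin_lt, hI]
  have hB : Finset.univ.filter (fun k : Fin n => i ≤ (k : ℕ)) = Finset.Ici I := by
    ext m; simp [Fin.le_def, -Fin.val_fin_le, hI]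
  have hcardA : (Finset.Iio I).card = i := Fin.card_Iio I
  have hcardB : (Finset.Ici I).card = n - i := Fin.card_Ici I
  have hcastn : ((n - i : ℕ) : ℝ) = (n : ℝ) - i := by
    rw [Nat.cast_sub hiln.le]
  have hni : (2 : ℝ) ≤ (n : ℝ) - i := by
    have : ((i : ℝ) + 2) ≤ n := by exact_mod_cast hi2'
    linarith
  have hi1' : (1 : ℝ) ≤ (i : ℝ) := by exact_mod_cast hi1
  constructor
  · intro k
    refine ⟨fun m => if m = k then -1 else if (m : ℕ) < i then 0 else 1, by simp, ?_, ?_⟩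
    · intro m hm; simp only [if_neg hm]; split <;> norm_num
    · rw [hL, hA, hB]
      have hsA : (∑ m ∈ Finset.Iio I, (if m = k then (-1 : ℝ) else if (m : ℕ) < i then 0 else 1))
          = if k ∈ Finset.Iio I then -1 else 0 := by
        rw [← Finset.sum_ite_eq' (Finset.Iio I) k (fun _ => (-1 : ℝ))]
        refine Finset.sum_congr rfl fun m hm => ?_
        have : (m : ℕ) < i := by simpa [Fin.lt_def, -Fin.val_fin_lt] using Finset.mem_Iio.mp hm
        split <;> simp [this]
      have hsB : (∑ m ∈ Finset.Ici I, (if m = k then (-1 : ℝ) else if (m : ℕ) < i then 0 else 1))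
          = (if k ∈ Finset.Ici I then (-2 : ℝ) else 0) + ((n : ℝ) - i) := by
        have : ∀ m ∈ Finset.Ici I, (if m = k then (-1 : ℝ) else if (m : ℕ) < i then 0 else 1)
            = (if m = k then (-2 : ℝ) else 0) + 1 := by
          intro m hm
          have : i ≤ (m : ℕ) := by simpa [Fin.le_def, -Fin.val_fin_le] using Finset.mem_Ici.mp hm
          rcases eq_or_ne m k with h | h <;> simp [h, Nat.not_lt.mpr this] <;> norm_num
        rw [Finset.sum_congr rfl this, Finset.sum_add_distrib,
          Finset.sum_ite_eq' (Finset.Ici I) k (fun _ => (-2 : ℝ))]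
        simp [hcardB, hcastn]
      rw [hsA, hsB]
      by_cases hk : (k : ℕ) < i
      · have h1 : k ∈ Finset.Iio I := by simpa [Fin.lt_def, -Fin.val_fin_lt] using hk
        have h2 : k ∉ Finset.Ici I := by simp [Fin.le_def, -Fin.val_fin_le, Nat.not_le.mpr hk, hI]
        rw [if_pos h1, if_neg h2]
        nlinarith
      · have h1 : k ∉ Finset.Iio I := by simp [Fin.lt_def, -Fin.val_fin_lt, Nat.not_lt.mp hk, hI]
        have h2 : k ∈ Finset.Ici I := by simpa [Fin.le_def, -Fin.val_fin_le] using Nat.not_lt.mp hk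
        rw [if_neg h1, if_pos h2]
        nlinarith
  · refine ⟨fun m => if (m : ℕ) < i then 1 else 0, ?_, fun m => by positivity⟩
    rw [hL, hA, hB]
    have hsA : (∑ m ∈ Finset.Iio I, (if (m : ℕ) < i then (1 : ℝ) else 0)) = (i : ℝ) := by
      rw [Finset.sum_congr rfl (fun m hm => if_pos (by simpa [Fin.lt_def, -Fin.val_fin_lt] using Finset.mem_Iio.mp hm))]
      simp [hcardA]
    have hsB : (∑ m ∈ Finset.Ici I, (if (m : ℕ) < i then (1 : ℝ) else 0)) = 0 := by
      rw [Finset.sum_congr rfl (fun m hm => if_neg (Nat.not_lt.mpr (by simpa [Fin.le_def, -Fin.val_fin_le] using Finset.mem_Ici.mp hm)))]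
      simp
    rw [hsA, hsB]
    nlinarith
end
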